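/- Let D be a braided monoidal category with a permutation action of a group G ⊆ S_n on the n-fold Deligne/direct product C^{⊠n} of a semisimple category C, permuting the tensor factors. If C has a simple object σ not isomorphic to the unit, and g ∈ G satisfies g ≠ e, then there exists a simple object X of C^{⊠n} with γ_g(X) ≇ X; consequently, in any braided crossed G-category with degree-e part equivalent (G-equivariantly) to C^{⊠n}, there is no invertible object of degree g. -/
import Mathlib


open CategoryTheory MonoidalCategory

universe v u

/-- A braided crossed `G`-category: a monoidal category with a `G`-grading on objects,
a compatible monoidal `G`-action, and a crossed braiding. -/
structure BraidedCrossedGCat (G : Type*) [Group G] (C : Type u) [Category.{v} C]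
    [MonoidalCategory C] where
  deg : C → G
  deg_tensor : ∀ X Y : C, deg (X ⊗ Y) = deg X * deg Y
  deg_unit : deg (𝟙_ C) = 1
  deg_iso : ∀ {X Y : C}, (X ≅ Y) → deg X = deg Y
  act : G → C ⥤ C
  actOne : act 1 ≅ Functor.id C
  actMul : ∀ g h : G, act (g * h) ≅ act h ⋙ act g
  actTensor : ∀ (g : G) (X Y : C), (act g).obj (X ⊗ Y) ≅ (act g).obj X ⊗ (act g).obj Y
  act_deg : ∀ (g : G) (X : C), deg ((act g).obj X) = g * deg X * g⁻¹
  braiding : ∀ X Y : C, X ⊗ Y ≅ (act (deg X)).obj Y ⊗ X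
  braiding_natural_right : ∀ (X : C) {Y Y' : C} (t : Y ⟶ Y'),
    (X ◁ t) ≫ (braiding X Y').hom = (braiding X Y).hom ≫ ((act (deg X)).map t ▷ X)
  braiding_natural_left : ∀ {X X' : C} (s : X ⟶ X') (Y : C) (h : deg X = deg X'),
    (s ▷ Y) ≫ (braiding X' Y).hom =
      (braiding X Y).hom ≫ (eqToHom (by rw [h]) ▷ X) ≫ ((act (deg X')).obj Y ◁ s)
  hexagon₁ : ∀ X Z T : C,
    (braiding X (Z ⊗ T)).hom ≫ ((actTensor (deg X) Z T).hom ▷ X) =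
      (α_ X Z T).inv ≫ ((braiding X Z).hom ▷ T) ≫
        (α_ ((act (deg X)).obj Z) X T).hom ≫
        ((act (deg X)).obj Z ◁ (braiding X T).hom) ≫
        (α_ ((act (deg X)).obj Z) ((act (deg X)).obj T) X).inv
  hexagon₂ : ∀ X Y Z : C,
    (braiding (X ⊗ Y) Z).hom ≫
      ((eqToHom (by rw [deg_tensor]) ≫ (actMul (deg X) (deg Y)).hom.app Z) ▷ (X ⊗ Y)) =
      (α_ X Y Z).hom ≫ (X ◁ (braiding Y Z).hom) ≫
        (α_ X ((act (deg Y)).obj Z) Y).inv ≫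
        ((braiding X ((act (deg Y)).obj Z)).hom ▷ Y) ≫
        (α_ ((act (deg X)).obj ((act (deg Y)).obj Z)) X Y).hom
  braiding_equivariant : ∀ (k : G) (X Y : C),
    (actTensor k X Y).inv ≫ (act k).map (braiding X Y).hom ≫
      (actTensor k ((act (deg X)).obj Y) X).hom =
    (braiding ((act k).obj X) ((act k).obj Y)).hom ≫
      ((eqToHom (by rw [act_deg]; rfl) ≫ (actMul (k * deg X * k⁻¹) k).inv.app Y ≫
        eqToHom (by rw [inv_mul_cancel_right]) ≫ (actMul k (deg X)).hom.app Y) ▷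
        (act k).obj X)

/-- An object of a monoidal category is invertible if it has a tensor-inverse. -/
def IsInvObj {C : Type u} [Category.{v} C] [MonoidalCategory C] (Y : C) : Prop :=
  ∃ Y' : C, Nonempty (Y ⊗ Y' ≅ 𝟙_ C) ∧ Nonempty (Y' ⊗ Y ≅ 𝟙_ C)

/-- Let `G ⊆ S_n` act by permutation on the simple objects of the `n`-fold
product `C^{⊠n}` (modelled by tuples of isomorphism classes of simples of `C`). If `C` has
a simple object `σ₀` not isomorphic to the unit object and `g ≠ e`, then some simple object
of `C^{⊠n}` is not isomorphic to its `γ_g`-image; consequently, in any braided crossed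
`G`-category whose degree-`e` simples are `G`-equivariantly identified with those of
`C^{⊠n}`, there is no invertible object of degree `g`. -/
theorem stmt_17 (n : ℕ) (ι : Type*) (σ₀ unitCl : ι) (hσ : σ₀ ≠ unitCl)
    {D : Type u} [Category.{v} D] [MonoidalCategory D]
    (G : Subgroup (Equiv.Perm (Fin n)))
    (B : BraidedCrossedGCat G D)
    -- `Φ x` realizes the simple object of `C^{⊠n}` with components in classes `x`
    (Φ : (Fin n → ι) → D)
    (hdeg : ∀ x : Fin n → ι, B.deg (Φ x) = 1)
    (hequiv : ∀ (g : G) (x : Fin n → ι),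
      Nonempty ((B.act g).obj (Φ x) ≅ Φ (fun i => x (((g : Equiv.Perm (Fin n)))⁻¹ i))))
    (hinj : ∀ x y : Fin n → ι, Nonempty (Φ x ≅ Φ y) → x = y)
    (g : G) (hg : g ≠ 1) :
    (∃ x : Fin n → ι, (fun i => x (((g : Equiv.Perm (Fin n)))⁻¹ i)) ≠ x ∧
      IsEmpty ((B.act g).obj (Φ x) ≅ Φ x)) ∧
    ¬ ∃ Y : D, B.deg Y = g ∧ IsInvObj Y := by
  -- Key lemma: an invertible object of degree `g` forces `γ_g X ≅ X` for degree-1 `X`.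
  have key : (∃ Y : D, B.deg Y = g ∧ IsInvObj Y) →
      ∀ x : Fin n → ι, Nonempty ((B.act g).obj (Φ x) ≅ Φ x) := by
    rintro ⟨Y, hY, Y', ⟨⟨e1⟩, ⟨e2⟩⟩⟩ x
    set X := Φ x with hX
    have hdX : B.deg X = 1 := hdeg x
    refine ⟨Iso.symm ?_⟩
    calc X ≅ X ⊗ 𝟙_ D := (ρ_ X).symm
      _ ≅ X ⊗ (Y ⊗ Y') := whiskerLeftIso X e1.symm
      _ ≅ (X ⊗ Y) ⊗ Y' := (α_ X Y Y').symm
      _ ≅ ((B.act (B.deg X)).obj Y ⊗ X) ⊗ Y' := whiskerRightIso (B.braiding X Y) Y'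
      _ ≅ ((B.act 1).obj Y ⊗ X) ⊗ Y' := by rw [hdX]
      _ ≅ (Y ⊗ X) ⊗ Y' := whiskerRightIso (whiskerRightIso (B.actOne.app Y) X) Y'
      _ ≅ ((B.act (B.deg Y)).obj X ⊗ Y) ⊗ Y' := whiskerRightIso (B.braiding Y X) Y'
      _ ≅ ((B.act g).obj X ⊗ Y) ⊗ Y' := by rw [hY]
      _ ≅ (B.act g).obj X ⊗ (Y ⊗ Y') := α_ _ Y Y'
      _ ≅ (B.act g).obj X ⊗ 𝟙_ D := whiskerLeftIso _ e1
      _ ≅ (B.act g).obj X := ρ_ _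
  -- Find a point moved by `g⁻¹`.
  have hgp : (g : Equiv.Perm (Fin n)) ≠ 1 := by
    intro h; exact hg (Subtype.ext h)
  have : ∃ i : Fin n, (g : Equiv.Perm (Fin n))⁻¹ i ≠ i := by
    by_contra h
    push_neg at h
    apply hgp
    have : (g : Equiv.Perm (Fin n))⁻¹ = 1 := Equiv.ext (by simpa using h)
    simpa [inv_eq_one] using this
  obtain ⟨i, hi⟩ := this
  set p := (g : Equiv.Perm (Fin n))⁻¹ with hp
  set x : Fin n → ι := fun j => if j = p i then σ₀ else unitCl with hx
  have hne : (fun j => x (p j)) ≠ x := by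
    intro h
    have := congrFun h i
    simp only [hx, if_pos rfl, if_neg (Ne.symm hi)] at this
    exact hσ this
  have hempty : IsEmpty ((B.act g).obj (Φ x) ≅ Φ x) := by
    constructor
    intro e
    exact hne (hinj _ _ ⟨(hequiv g x).some.symm ≪≫ e⟩)
  refine ⟨⟨x, hne, hempty⟩, fun hY => ?_⟩
  exact hempty.false (key hY x).some
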